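/- Let 1 ≤ i ≤ N − 1 and let S, T be N×N positive semi-definite Hermitian matrices over 𝕂 with rank S = i, rank T = N − i, and S + T positive definite. Then there exists an invertible N×N matrix g over 𝕂 such that g·S·gᴴ is the diagonal matrix with the first i diagonal entries equal to 1 and the rest equal to 0, and g·T·gᴴ is the complementary diagonal projection (first i entries 0, last N − i entries 1). (The matrix content of Proposition 7.1(2): the automorphism group acts transitively on the stratum T¹Ω_{i,N−i}.) -/

import Mathlib

open scoped ComplexOrder

private lemma conj_submatrix {N : ℕ} {𝕂 : Type*} [RCLike 𝕂]
    (P X Q : Matrix (Fin N) (Fin N) 𝕂) (e : Fin N ≃ Fin N) :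
    P.submatrix e id * X * Q.submatrix id e = (P * X * Q).submatrix e e := by
  have h1 : P.submatrix ⇑e id * X = (P * X).submatrix ⇑e id := by
    simpa using Matrix.submatrix_mul_equiv P X ⇑e (Equiv.refl _) id
  have h2 : (P * X).submatrix ⇑e id * Q.submatrix id ⇑e
      = (P * X * Q).submatrix ⇑e ⇑e := by
    simpa using Matrix.submatrix_mul_equiv (P * X) Q ⇑e (Equiv.refl _) ⇑e
  rw [h1, h2]

/-- The matrix content of Proposition 7.1(2): for `1 ≤ i ≤ N − 1`, if `S`, `T` are
positive semi-definite Hermitian with `rank S = i`, `rank T = N − i` and `S + T`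
positive definite, then some invertible `g` simultaneously conjugates `S` and `T`
(via `X ↦ g·X·gᴴ`) to the complementary diagonal projections of ranks `i` and `N − i`. -/
theorem transitivity_on_stratum {N : ℕ} (hN : 1 ≤ N) (𝕂 : Type*) [RCLike 𝕂]
    (i : ℕ) (hi : 1 ≤ i) (hiN : i ≤ N - 1)
    (S T : Matrix (Fin N) (Fin N) 𝕂) (hS : S.PosSemidef) (hT : T.PosSemidef)
    (hrS : S.rank = i) (hrT : T.rank = N - i) (hST : (S + T).PosDef) :
    ∃ g : Matrix (Fin N) (Fin N) 𝕂, IsUnit g ∧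
      g * S * g.conjTranspose =
        Matrix.diagonal (fun k : Fin N => if (k : ℕ) < i then (1 : 𝕂) else 0) ∧
      g * T * g.conjTranspose =
        Matrix.diagonal (fun k : Fin N => if (k : ℕ) < i then (0 : 𝕂) else 1) := by
  classical
  have hiN' : i ≤ N := le_trans hiN (Nat.sub_le _ _)
  set A := S + T with hAdef
  set Q := (open scoped MatrixOrder in CFC.sqrt A) with hQdef
  have hQps : Q.PosSemidef := (open scoped MatrixOrder in Matrix.nonneg_iff_posSemidef.mp (CFC.sqrt_nonneg A))
  have hQQ : Q * Q = A :=
    (open scoped MatrixOrder in CFC.sqrt_mul_sqrt_self A hST.posSemidef.nonneg)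
  have hdetA : IsUnit A.det := hST.det_pos.ne'.isUnit
  have hdetQ : IsUnit Q.det := by
    have h : Q.det * Q.det = A.det := by rw [← Matrix.det_mul, hQQ]
    exact (isUnit_of_mul_isUnit_left (h ▸ hdetA))
  set B := Q⁻¹ with hBdef
  have hdetB : IsUnit B.det := Matrix.isUnit_nonsing_inv_det Q hdetQ
  have hBH : B.conjTranspose = B := hQps.1.inv
  have hQB : Q * B = 1 := Matrix.mul_nonsing_inv Q hdetQ
  have hBQ : B * Q = 1 := Matrix.nonsing_inv_mul Q hdetQ
  have hBAB : B * A * B = 1 := by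
    rw [← hQQ, ← mul_assoc, hBQ, one_mul, hQB]
  set M := B * S * B with hMdef
  have hMps : M.PosSemidef := by
    have := hS.mul_mul_conjTranspose_same B
    rwa [hBH] at this
  have hsum : M + B * T * B = 1 := by
    rw [← hBAB, hAdef, hMdef]
    noncomm_ring
  have hBTB : B * T * B = 1 - M := eq_sub_of_add_eq' hsum
  have hrankM : M.rank = i := by
    rw [hMdef, Matrix.rank_mul_eq_left_of_isUnit_det B (B * S) hdetB,
      Matrix.rank_mul_eq_right_of_isUnit_det B S hdetB, hrS]
  have hrank1M : (1 - M).rank = N - i := by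
    rw [← hBTB, Matrix.rank_mul_eq_left_of_isUnit_det B (B * T) hdetB,
      Matrix.rank_mul_eq_right_of_isUnit_det B T hdetB, hrT]
  -- spectral theorem for M
  have hMH : M.IsHermitian := hMps.1
  set u : Matrix (Fin N) (Fin N) 𝕂 := (hMH.eigenvectorUnitary : Matrix (Fin N) (Fin N) 𝕂) with hu
  set eig : Fin N → ℝ := hMH.eigenvalues with heig
  have hspec : star u * M * u = Matrix.diagonal (RCLike.ofReal ∘ eig) :=
    (Unitary.conjStarAlgAut_star_apply (S := 𝕂) _ _).symm.trans
      hMH.conjStarAlgAut_star_eigenvectorUnitary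
  have huu : star u * u = 1 := Matrix.mem_unitaryGroup_iff'.mp hMH.eigenvectorUnitary.2
  have huu' : u * star u = 1 := Matrix.mem_unitaryGroup_iff.mp hMH.eigenvectorUnitary.2
  have hdetsu : IsUnit (star u).det :=
    IsUnit.of_mul_eq_one u.det (by rw [← Matrix.det_mul, huu, Matrix.det_one])
  have hdetu : IsUnit u.det :=
    IsUnit.of_mul_eq_one (star u).det (by rw [← Matrix.det_mul, huu', Matrix.det_one])
  have hspec' : star u * (1 - M) * u = Matrix.diagonal (fun k => 1 - (eig k : 𝕂)) := by
    have h1 : star u * (1 - M) * u = star u * u - star u * M * u := by noncomm_ring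
    rw [h1, huu, hspec]
    ext k l
    by_cases h : k = l <;>
      simp [Matrix.sub_apply, Matrix.one_apply, Matrix.diagonal_apply, h]
  -- eigenvalue counting
  have hc1 : Fintype.card {k // eig k ≠ 0} = i := by
    rw [← hrankM, hMH.rank_eq_card_non_zero_eigs]
  have hc2 : Fintype.card {k // eig k ≠ 1} = N - i := by
    have hr : (Matrix.diagonal (fun k => 1 - (eig k : 𝕂))).rank = N - i := by
      rw [← hspec', Matrix.rank_mul_eq_left_of_isUnit_det u (star u * (1 - M)) hdetu,
        Matrix.rank_mul_eq_right_of_isUnit_det (star u) (1 - M) hdetsu, hrank1M]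
    rw [Matrix.rank_diagonal] at hr
    rw [← hr]
    refine Fintype.card_congr (Equiv.subtypeEquivRight fun k => ?_)
    rw [sub_ne_zero, ne_comm]
    norm_cast
  have hcard1 : Fintype.card {k // eig k = 1} = i := by
    have h1 := Fintype.card_subtype_compl (fun k : Fin N => eig k = 1)
    have h2 : Fintype.card {k // ¬ eig k = 1} = N - i := hc2
    have h3 : Fintype.card {k // eig k = 1} ≤ Fintype.card (Fin N) :=
      Fintype.card_subtype_le _
    rw [h2, Fintype.card_fin] at h1
    rw [Fintype.card_fin] at h3
    omega
  have hcard0 : Fintype.card {k // eig k = 0} = N - i := by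
    have h1 := Fintype.card_subtype_compl (fun k : Fin N => eig k = 0)
    have h2 : Fintype.card {k // ¬ eig k = 0} = i := hc1
    have h3 : Fintype.card {k // eig k = 0} ≤ Fintype.card (Fin N) :=
      Fintype.card_subtype_le _
    rw [h2, Fintype.card_fin] at h1
    rw [Fintype.card_fin] at h3
    omega
  have dichot : ∀ k, eig k = 0 ∨ eig k = 1 := by
    intro k
    by_contra h
    push_neg at h
    obtain ⟨h0, h1⟩ := h
    set s0 : Finset (Fin N) := Finset.univ.filter (fun k => eig k = 0) with hs0
    set s1 : Finset (Fin N) := Finset.univ.filter (fun k => eig k = 1) with hs1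
    have hds : Disjoint s0 s1 := by
      rw [Finset.disjoint_left]
      intro a ha hb
      rw [hs0, Finset.mem_filter] at ha
      rw [hs1, Finset.mem_filter] at hb
      have : (0 : ℝ) = 1 := by rw [← ha.2, hb.2]
      norm_num at this
    have hcs0 : s0.card = N - i := by
      rw [hs0, ← Fintype.card_subtype, hcard0]
    have hcs1 : s1.card = i := by
      rw [hs1, ← Fintype.card_subtype, hcard1]
    have hcu : (s0 ∪ s1).card = Fintype.card (Fin N) := by
      rw [Finset.card_union_of_disjoint hds, hcs0, hcs1, Fintype.card_fin]
      omega
    have huniv : s0 ∪ s1 = Finset.univ := Finset.eq_univ_of_card _ hcu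
    have : k ∈ s0 ∪ s1 := huniv ▸ Finset.mem_univ k
    rcases Finset.mem_union.mp this with hk | hk
    · exact h0 (Finset.mem_filter.mp hk).2
    · exact h1 (Finset.mem_filter.mp hk).2
  -- the sorting permutation
  have hcardne1 : Fintype.card {k // ¬ eig k = 1} = N - i := hc2
  let e₁ : Fin i ≃ {k // eig k = 1} := (Fintype.equivFinOfCardEq hcard1).symm
  let e₂ : Fin (N - i) ≃ {k // ¬ eig k = 1} := (Fintype.equivFinOfCardEq hcardne1).symm
  have hiNi : i + (N - i) = N := Nat.add_sub_cancel' hiN'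
  let e : Fin N ≃ Fin N :=
    (finCongr hiNi.symm).trans ((finSumFinEquiv.symm).trans
      ((e₁.sumCongr e₂).trans (Equiv.sumCompl fun k => eig k = 1)))
  have he : ∀ k : Fin N, eig (e k) = if (k : ℕ) < i then 1 else 0 := by
    intro k
    by_cases hk : (k : ℕ) < i
    · rw [if_pos hk]
      have h1 : (finCongr hiNi.symm) k = Fin.castAdd (N - i) ⟨(k : ℕ), hk⟩ := by
        apply Fin.ext; simp
      have : e k = ((e₁ ⟨(k : ℕ), hk⟩ : {k // eig k = 1}) : Fin N) := by
        simp only [e, Equiv.trans_apply, h1, finSumFinEquiv_symm_apply_castAdd,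
          Equiv.sumCongr_apply, Sum.map_inl, Equiv.sumCompl_apply_inl]
      rw [this]
      exact (e₁ ⟨(k : ℕ), hk⟩).2
    · rw [if_neg hk]
      have hk2 : (k : ℕ) - i < N - i := by
        have := k.isLt; omega
      have h1 : (finCongr hiNi.symm) k = Fin.natAdd i ⟨(k : ℕ) - i, hk2⟩ := by
        apply Fin.ext; simp; omega
      have : e k = ((e₂ ⟨(k : ℕ) - i, hk2⟩ : {k // ¬ eig k = 1}) : Fin N) := by
        simp only [e, Equiv.trans_apply, h1, finSumFinEquiv_symm_apply_natAdd,
          Equiv.sumCongr_apply, Sum.map_inr, Equiv.sumCompl_apply_inr]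
      rw [this]
      rcases dichot ((e₂ ⟨(k : ℕ) - i, hk2⟩ : {k // ¬ eig k = 1}) : Fin N) with h | h
      · exact h
      · exact absurd h (e₂ ⟨(k : ℕ) - i, hk2⟩).2
  -- assemble g
  set g0 : Matrix (Fin N) (Fin N) 𝕂 := star u * B with hg0
  have hg0H : g0.conjTranspose = B * u := by
    rw [hg0, Matrix.conjTranspose_mul, hBH, ← Matrix.star_eq_conjTranspose, star_star]
  have hdetg0 : IsUnit g0.det := by
    rw [hg0, Matrix.det_mul]; exact hdetsu.mul hdetB
  have hgS : g0 * S * g0.conjTranspose = Matrix.diagonal (RCLike.ofReal ∘ eig) := by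
    rw [hg0H, ← hspec, hg0, hMdef]
    noncomm_ring
  have hgT : g0 * T * g0.conjTranspose = Matrix.diagonal (fun k => 1 - (eig k : 𝕂)) := by
    rw [hg0H, ← hspec', ← hBTB, hg0]
    noncomm_ring
  refine ⟨g0.submatrix e id, ?_, ?_, ?_⟩
  · have hginv : g0.submatrix ⇑e id * (g0⁻¹.submatrix id ⇑e) = 1 := by
      have h := conj_submatrix g0 1 g0⁻¹ e
      rw [Matrix.mul_one, Matrix.mul_one, Matrix.mul_nonsing_inv g0 hdetg0,
        Matrix.submatrix_one_equiv] at h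
      exact h
    have hdu : IsUnit (g0.submatrix ⇑e id).det :=
      IsUnit.of_mul_eq_one (g0⁻¹.submatrix id ⇑e).det
        (by rw [← Matrix.det_mul, hginv, Matrix.det_one])
    exact (Matrix.isUnit_iff_isUnit_det _).mpr hdu
  · rw [Matrix.conjTranspose_submatrix, conj_submatrix, hgS,
      Matrix.submatrix_diagonal_equiv]
    refine congrArg Matrix.diagonal (funext fun k => ?_)
    simp only [Function.comp_apply, he k]
    split_ifs <;> norm_num
  · rw [Matrix.conjTranspose_submatrix, conj_submatrix, hgT,
      Matrix.submatrix_diagonal_equiv]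
    refine congrArg Matrix.diagonal (funext fun k => ?_)
    simp only [Function.comp_apply, he k]
    split_ifs <;> norm_num
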